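/- For every integer q ≥ 2, the q-liminf density of the second Zimin word Z₂ = aba equals 1/q; that is, liminf of δ(Z₂, W) over q-ary words W as |W| → ∞ equals 1/q. -/

import Mathlib

open Filter

/-- `U` is an instance of `V`: image of `V` under a nonerasing substitution. -/
def IsInstance {Γ β : Type*} (V : List Γ) (U : List β) : Prop :=
  ∃ φ : Γ → List β, (∀ x ∈ V, φ x ≠ []) ∧ U = (V.map φ).flatten

/-- `W` encounters `V`: some factor of `W` is an instance of `V`. -/
def Encounters {Γ β : Type*} (V : List Γ) (W : List β) : Prop :=
  ∃ U : List β, U <:+: W ∧ IsInstance V U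

/-- Zimin words over alphabet ℕ. -/
def Zimin : ℕ → List ℕ
  | 0 => []
  | n + 1 => Zimin n ++ [n] ++ Zimin n

/-- Least M such that every q-ary word of length M encounters Z_n. -/
noncomputable def fZ (n q : ℕ) : ℕ :=
  sInf {M | ∀ W : List (Fin q), W.length = M → Encounters (Zimin n) W}

/-- Exponential tower with b copies of a. -/
def tower (a : ℕ) : ℕ → ℕ
  | 0 => 1
  | b + 1 => a ^ tower a b

/-- Number of length-M q-ary words that are instances of V. -/
noncomputable def instCount (V : List ℕ) (q M : ℕ) : ℕ :=
  Nat.card {W : Fin M → Fin q // IsInstance V (List.ofFn W)}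

/-- Factor density d(V,W). -/
noncomputable def factorDensity {α : Type*} [DecidableEq α] (V W : List α) : ℝ :=
  (((((Finset.range (W.length + 1)) ×ˢ (Finset.range (W.length + 1))).filter
      (fun p => p.1 < p.2 ∧ (W.drop p.1).take (p.2 - p.1) = V)).card : ℝ)) /
    ((W.length : ℝ) + 1 - (V.length : ℝ))

/-- Number of substrings of W (given by position pairs) that are V-instances. -/
noncomputable def instSubCount {Γ β : Type*} (V : List Γ) (W : List β) : ℕ :=
  Nat.card {p : ℕ × ℕ //
    p.1 < p.2 ∧ p.2 ≤ W.length ∧ IsInstance V ((W.drop p.1).take (p.2 - p.1))}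

/-- Instance density δ(V,W). -/
noncomputable def instDensity {Γ β : Type*} (V : List Γ) (W : List β) : ℝ :=
  (instSubCount V W : ℝ) / ((W.length + 1).choose 2 : ℝ)

/-- q-liminf density of V. -/
noncomputable def liminfDensity {Γ : Type*} (V : List Γ) (q : ℕ) : ℝ :=
  Filter.liminf (fun W : List (Fin q) => instDensity V W) (Filter.comap List.length Filter.atTop)

/-- Expected instance density of V in a uniformly random q-ary word of length n. -/
noncomputable def expDensity {Γ : Type*} (V : List Γ) (q n : ℕ) : ℝ :=
  (∑ W : Fin n → Fin q, instDensity V (List.ofFn W)) / (q : ℝ) ^ n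

/-- Variance of the instance density of V in a uniformly random q-ary word of length n. -/
noncomputable def varDensity {Γ : Type*} (V : List Γ) (q n : ℕ) : ℝ :=
  (∑ W : Fin n → Fin q, (instDensity V (List.ofFn W) - expDensity V q n) ^ 2) / (q : ℝ) ^ n

/-- Probability that a uniformly random q-ary word of length n is a V-instance. -/
noncomputable def instProb {Γ : Type*} (V : List Γ) (q n : ℕ) : ℝ :=
  (Nat.card {W : Fin n → Fin q // IsInstance V (List.ofFn W)} : ℝ) / (q : ℝ) ^ n

/-- V is doubled: every letter occurring in V occurs at least twice. -/
def Doubled {Γ : Type*} [DecidableEq Γ] (V : List Γ) : Prop :=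
  ∀ x ∈ V, 2 ≤ V.count x

/-- Number of letter recurrences ‖V‖ = |V| - |L(V)|. -/
def recurCount {Γ : Type*} [DecidableEq Γ] (V : List Γ) : ℕ :=
  V.length - V.dedup.length

lemma zimin_two : Zimin 2 = [0, 1, 0] := rfl

lemma isInstance_z2 {β : Type*} {U : List β} :
    IsInstance (Zimin 2) U ↔ ∃ A B : List β, A ≠ [] ∧ B ≠ [] ∧ U = A ++ B ++ A := by
  constructor
  · rintro ⟨φ, hne, rfl⟩
    exact ⟨φ 0, φ 1, hne 0 (by simp [zimin_two]), hne 1 (by simp [zimin_two]),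
      by simp [zimin_two]⟩
  · rintro ⟨A, B, hA, hB, rfl⟩
    refine ⟨fun x => if x = 1 then B else A, ?_, ?_⟩
    · intro x hx
      rw [zimin_two] at hx
      simp only [List.mem_cons] at hx
      rcases hx with rfl | rfl | rfl | h
      · simpa
      · simpa
      · simpa
      · simp at h
    · simp [zimin_two]

lemma mem_instance_pairs {β : Type*} {W : List β} (d : β) {i j : ℕ} (h3 : i + 3 ≤ j)
    (hj : j ≤ W.length) (he : W.getD i d = W.getD (j - 1) d) :
    IsInstance (Zimin 2) ((W.drop i).take (j - i)) := by
  obtain ⟨L, hL⟩ : ∃ L, j - i = L + 3 := ⟨j - i - 3, by omega⟩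
  have hi : i < W.length := by omega
  have hj1 : j - 1 < W.length := by omega
  rw [isInstance_z2]
  have he' : W[j - 1] = W[i] := by
    rw [List.getD_eq_getElem _ _ hi, List.getD_eq_getElem _ _ hj1] at he
    exact he.symm
  refine ⟨[W[i]], (W.drop (i + 1)).take (L + 1), by simp, ?_, ?_⟩
  · have hlen : ((W.drop (i + 1)).take (L + 1)).length = L + 1 := by
      rw [List.length_take, List.length_drop]; omega
    intro h; rw [h] at hlen; simp at hlen
  · rw [hL]
    rw [List.drop_eq_getElem_cons hi]
    show _ = _
    have h1 : List.take (L + 3) (W[i] :: W.drop (i + 1)) =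
        W[i] :: List.take (L + 2) (W.drop (i + 1)) := rfl
    rw [h1, List.take_succ]
    have h2 : (W.drop (i + 1))[L + 1]? = some (W[j - 1]) := by
      rw [List.getElem?_drop]
      have : i + 1 + (L + 1) = j - 1 := by omega
      rw [this, List.getElem?_eq_getElem hj1]
    rw [h2, he']
    simp

lemma instance_pairs_spec {β : Type*} {W : List β} (d : β) {i j : ℕ} (hij : i < j)
    (hj : j ≤ W.length) (h : IsInstance (Zimin 2) ((W.drop i).take (j - i))) :
    ∃ k b, 1 ≤ k ∧ 1 ≤ b ∧ j - i = 2 * k + b ∧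
      ∀ o < k, W.getD (i + o) d = W.getD (j - k + o) d := by
  rw [isInstance_z2] at h
  obtain ⟨A, B, hA, hB, hU⟩ := h
  have hUlen : ((W.drop i).take (j - i)).length = j - i := by
    rw [List.length_take, List.length_drop]; omega
  have hlen : j - i = 2 * A.length + B.length := by
    rw [hU] at hUlen; simp only [List.length_append] at hUlen; omega
  have hA1 : 1 ≤ A.length := List.length_pos_iff.mpr hA
  have hB1 : 1 ≤ B.length := List.length_pos_iff.mpr hB
  refine ⟨A.length, B.length, hA1, hB1, hlen, ?_⟩
  intro o ho
  have hgen : ∀ n, n < j - i → ((W.drop i).take (j - i))[n]? = W[i + n]? := by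
    intro n hn
    rw [List.getElem?_take, if_pos hn, List.getElem?_drop]
  have e1 : W[i + o]? = A[o]? := by
    rw [← hgen o (by omega), hU]
    rw [List.getElem?_append_left (by simp; omega), List.getElem?_append_left (by omega)]
  have e2 : W[i + (A.length + B.length + o)]? = A[o]? := by
    rw [← hgen _ (by omega), hU]
    rw [List.getElem?_append_right (by simp only [List.length_append]; omega)]
    congr 1
    simp only [List.length_append]
    omega
  have hidx : j - A.length + o = i + (A.length + B.length + o) := by omega
  rw [List.getD_eq_getElem?_getD, List.getD_eq_getElem?_getD, e1, hidx, e2]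

def instSet {Γ β : Type*} (V : List Γ) (W : List β) : Set (ℕ × ℕ) :=
  {p | p.1 < p.2 ∧ p.2 ≤ W.length ∧ IsInstance V ((W.drop p.1).take (p.2 - p.1))}

lemma instSubCount_eq_ncard {Γ β : Type*} (V : List Γ) (W : List β) :
    instSubCount V W = (instSet V W).ncard := by
  rw [← Nat.card_coe_set_eq]
  rfl

lemma instSet_subset {Γ β : Type*} (V : List Γ) (W : List β) :
    instSet V W ⊆ ↑((Finset.range (W.length + 1)) ×ˢ (Finset.range (W.length + 1))) := by
  rintro ⟨a, b⟩ ⟨h1, h2, _⟩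
  simp only [Finset.coe_product, Set.mem_prod, Finset.mem_coe, Finset.mem_range]
  omega

lemma instSet_finite {Γ β : Type*} (V : List Γ) (W : List β) : (instSet V W).Finite :=
  Set.Finite.subset (Finset.finite_toSet _) (instSet_subset V W)

lemma lower_count (q : ℕ) (hq : 2 ≤ q) (W : List (Fin q)) :
    W.length ^ 2 ≤ 2 * q * instSubCount (Zimin 2) W + 3 * q * W.length := by
  classical
  set n := W.length with hn
  have hq0 : 0 < q := by omega
  set d : Fin q := ⟨0, hq0⟩ with hd
  set fib : Fin q → Finset ℕ := fun c => (Finset.range n).filter (fun a => W.getD a d = c)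
    with hfib
  set EqP : Finset (ℕ × ℕ) := ((Finset.range n) ×ˢ (Finset.range n)).filter
      (fun p => W.getD p.1 d = W.getD p.2 d) with hEqP
  set AllP := EqP.filter (fun p => p.1 < p.2) with hAllP
  set P2 := EqP.filter (fun p => p.1 + 2 ≤ p.2) with hP2
  have hA : EqP.card = ∑ c : Fin q, (fib c).card ^ 2 := by
    rw [Finset.card_eq_sum_card_fiberwise (f := fun p => W.getD p.1 d)
      (t := Finset.univ) (fun x _ => Finset.mem_univ _)]
    refine Finset.sum_congr rfl (fun c _ => ?_)
    have hcc : EqP.filter (fun p => W.getD p.1 d = c) = (fib c) ×ˢ (fib c) := by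
      ext ⟨a, b⟩
      simp only [hEqP, hfib, Finset.mem_filter, Finset.mem_product, Finset.mem_range]
      constructor
      · rintro ⟨⟨⟨ha, hb⟩, hab⟩, hc⟩
        exact ⟨⟨ha, hc⟩, ⟨hb, by rw [← hab, hc]⟩⟩
      · rintro ⟨⟨ha, hc⟩, ⟨hb, hc'⟩⟩
        exact ⟨⟨⟨ha, hb⟩, by rw [hc, hc']⟩, hc⟩
    rw [hcc, Finset.card_product, sq]
  have hB : ∑ c : Fin q, (fib c).card = n := by
    rw [← Finset.card_range n, Finset.card_eq_sum_card_fiberwise (f := fun a => W.getD a d)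
      (t := Finset.univ) (fun x _ => Finset.mem_univ _)]
  have hC : n ^ 2 ≤ EqP.card * q := by
    have h := Finset.sum_mul_sq_le_sq_mul_sq Finset.univ
      (fun c : Fin q => (fib c).card) (fun _ => 1)
    simp only [mul_one, one_pow, Finset.sum_const, Finset.card_univ, Fintype.card_fin,
      smul_eq_mul] at h
    rw [hB, ← hA] at h
    simpa [mul_comm] using h
  have hD : EqP.card ≤ AllP.card + AllP.card + n := by
    have hsub : EqP ⊆ (AllP ∪ AllP.image Prod.swap) ∪
        (Finset.range n).image (fun a => (a, a)) := by
      intro p hp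
      obtain ⟨a, b⟩ := p
      have hm := hp
      simp only [hEqP, Finset.mem_filter, Finset.mem_product, Finset.mem_range] at hm
      rcases lt_trichotomy a b with h | h | h
      · exact Finset.mem_union_left _ (Finset.mem_union_left _
          (Finset.mem_filter.mpr ⟨hp, h⟩))
      · refine Finset.mem_union_right _ (Finset.mem_image.mpr ⟨a, ?_, ?_⟩)
        · simp [Finset.mem_range, hm.1.1]
        · simp [h]
      · refine Finset.mem_union_left _ (Finset.mem_union_right _ ?_)
        refine Finset.mem_image.mpr ⟨(b, a), ?_, rfl⟩
        refine Finset.mem_filter.mpr ⟨?_, h⟩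
        simp only [hEqP, Finset.mem_filter, Finset.mem_product, Finset.mem_range]
        exact ⟨⟨hm.1.2, hm.1.1⟩, hm.2.symm⟩
    calc EqP.card ≤ ((AllP ∪ AllP.image Prod.swap) ∪
          (Finset.range n).image (fun a => (a, a))).card := Finset.card_le_card hsub
      _ ≤ (AllP ∪ AllP.image Prod.swap).card +
          ((Finset.range n).image (fun a => (a, a))).card := Finset.card_union_le _ _
      _ ≤ (AllP.card + (AllP.image Prod.swap).card) +
          ((Finset.range n).image (fun a => (a, a))).card := by
            exact add_le_add_left (Finset.card_union_le _ _) _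
      _ ≤ AllP.card + AllP.card + n :=
            add_le_add (add_le_add_right Finset.card_image_le _)
              ((Finset.card_image_le).trans (by simp))
  have hE : AllP.card ≤ P2.card + n := by
    have hsub : AllP ⊆ P2 ∪ (Finset.range n).image (fun a => (a, a + 1)) := by
      intro p hp
      obtain ⟨a, b⟩ := p
      have hm := Finset.mem_filter.mp hp
      rcases Nat.lt_or_ge (a + 1) b with h | h
      · exact Finset.mem_union_left _ (Finset.mem_filter.mpr ⟨hm.1, by omega⟩)
      · have hb : b = a + 1 := by omega
        refine Finset.mem_union_right _ (Finset.mem_image.mpr ⟨a, ?_, by rw [hb]⟩)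
        have := hm.1
        simp only [hEqP, Finset.mem_filter, Finset.mem_product, Finset.mem_range] at this
        simp [this.1.1]
    calc AllP.card ≤ _ := Finset.card_le_card hsub
      _ ≤ P2.card + ((Finset.range n).image (fun a => (a, a + 1))).card :=
          Finset.card_union_le _ _
      _ ≤ P2.card + n :=
          add_le_add_right ((Finset.card_image_le).trans (by simp)) _
  have hF : P2.card ≤ instSubCount (Zimin 2) W := by
    rw [instSubCount_eq_ncard, ← Set.ncard_coe_finset P2]
    refine Set.ncard_le_ncard_of_injOn (fun p => (p.1, p.2 + 1)) ?_ ?_ (instSet_finite _ _)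
    · rintro ⟨a, b⟩ hp
      simp only [Finset.mem_coe, hP2, hEqP, Finset.mem_filter, Finset.mem_product,
        Finset.mem_range] at hp
      obtain ⟨⟨⟨ha, hb⟩, hab⟩, h2b⟩ := hp
      simp only [instSet, Set.mem_setOf_eq]
      refine ⟨by omega, by omega, ?_⟩
      have h2 : b + 1 - 1 = b := by omega
      exact mem_instance_pairs d (by omega) (by omega) (by rw [h2]; exact hab)
    · rintro ⟨a, b⟩ _ ⟨a', b'⟩ _ h
      simpa [Prod.ext_iff] using h
  calc n ^ 2 ≤ EqP.card * q := hC
    _ ≤ (AllP.card + AllP.card + n) * q := by gcongr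
    _ ≤ ((P2.card + n) + (P2.card + n) + n) * q := by gcongr
    _ = 2 * P2.card * q + 3 * n * q := by ring
    _ ≤ 2 * instSubCount (Zimin 2) W * q + 3 * n * q := by gcongr
    _ = 2 * q * instSubCount (Zimin 2) W + 3 * q * n := by ring

lemma instDensity_nonneg {Γ β : Type*} (V : List Γ) (W : List β) :
    0 ≤ instDensity V W :=
  div_nonneg (Nat.cast_nonneg _) (Nat.cast_nonneg _)

lemma choose_two_cast (n : ℕ) : (((n + 1).choose 2 : ℕ) : ℝ) = (n + 1) * n / 2 := by
  rw [Nat.cast_choose_two]; push_cast; ring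

lemma lower_density (q : ℕ) (hq : 2 ≤ q) {ε : ℝ} (hε : 0 < ε) (W : List (Fin q))
    (h4 : 4 / ε ≤ (W.length : ℝ)) :
    1 / (q : ℝ) - ε ≤ instDensity (Zimin 2) W := by
  set n := W.length with hn
  set c := instSubCount (Zimin 2) W with hc
  have hQ : (0 : ℝ) < q := by
    have : (2 : ℝ) ≤ q := by exact_mod_cast hq
    linarith
  have hQ2 : (2 : ℝ) ≤ q := by exact_mod_cast hq
  have hnR : 4 / ε ≤ (n : ℝ) := h4
  have hn4 : 4 ≤ ε * n := by
    rw [div_le_iff₀ hε] at hnR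
    linarith [hnR]
  have hn0 : n ≠ 0 := by
    intro h
    rw [h] at hn4
    norm_num at hn4
  have hn1 : (1 : ℝ) ≤ n := by
    exact_mod_cast Nat.one_le_iff_ne_zero.mpr hn0
  have hkey : (n : ℝ) ^ 2 ≤ 2 * q * c + 3 * q * n := by
    exact_mod_cast lower_count q hq W
  have hc0 : (0 : ℝ) ≤ c := Nat.cast_nonneg _
  rw [instDensity, ← hc, ← hn, choose_two_cast]
  rw [le_div_iff₀ (by nlinarith)]
  have hexp : (1 / (q : ℝ) - ε) * ((n + 1) * n / 2) =
      (n + 1) * n / (2 * q) - ε * ((n + 1) * n) / 2 := by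
    field_simp
  rw [hexp]
  rw [div_sub_div _ _ (by nlinarith : (2 * (q:ℝ)) ≠ 0) (two_ne_zero), div_le_iff₀ (by nlinarith)]
  ring_nf
  nlinarith [mul_pos hQ (mul_pos (show (0:ℝ) < n by linarith) hε),
    mul_le_mul_of_nonneg_left hn4 (mul_nonneg (le_of_lt hQ) (Nat.cast_nonneg (α := ℝ) n)),
    mul_le_mul_of_nonneg_left hn4 (le_of_lt hQ), hkey, hn1, hQ2]

def zWord (q m : ℕ) (hq : 0 < q) : List (Fin q) :=
  List.ofFn (fun x : Fin (q * m) => ⟨x.1 / m % q, Nat.mod_lt _ hq⟩)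

lemma zWord_length (q m : ℕ) (hq : 0 < q) : (zWord q m hq).length = q * m := by
  simp [zWord]

lemma zWord_getD_val (q m : ℕ) (hq : 0 < q) (hm : 0 < m) {x : ℕ} (hx : x < q * m)
    (d : Fin q) : ((zWord q m hq).getD x d).val = x / m := by
  have hx2 : x / m < q := (Nat.div_lt_iff_lt_mul hm).2 hx
  have hxl : x < (zWord q m hq).length := by rw [zWord_length]; exact hx
  rw [List.getD_eq_getElem _ _ hxl]
  simp [zWord, Nat.mod_eq_of_lt hx2]

lemma div_chain (m i : ℕ) : ∀ k, (∀ o < k, (i + o) / m = i / m) ∨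
    (∃ o, o + 1 < k ∧ (i + o) / m < (i + o + 1) / m) := by
  intro k
  induction k with
  | zero => left; omega
  | succ k ih =>
    rcases ih with h | ⟨o, ho, hlt⟩
    · by_cases hc : (i + k) / m = i / m
      · left
        intro o ho
        rcases Nat.lt_or_ge o k with h' | h'
        · exact h o h'
        · have : o = k := by omega
          rw [this]; exact hc
      · have hk1 : 1 ≤ k := by
          by_contra h0
          have hk0 : k = 0 := by omega
          subst hk0
          simp at hc
        right
        refine ⟨k - 1, by omega, ?_⟩
        have e1 : (i + (k - 1)) / m = i / m := h (k - 1) (by omega)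
        have e2 : i + (k - 1) + 1 = i + k := by omega
        rw [e1, e2]
        exact lt_of_le_of_ne (Nat.div_le_div_right (by omega)) (Ne.symm hc)
    · right; exact ⟨o, by omega, hlt⟩

lemma div_succ_dvd (m x : ℕ) (h : x / m < (x + 1) / m) : x + 1 = m * (x / m + 1) := by
  have hd : m ∣ x + 1 := by
    by_contra hd
    rw [Nat.succ_div, if_neg hd] at h
    omega
  have h2 : (x + 1) / m = x / m + 1 := by rw [Nat.succ_div, if_pos hd]
  calc x + 1 = m * ((x + 1) / m) := (Nat.mul_div_cancel' hd).symm
    _ = m * (x / m + 1) := by rw [h2]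

lemma zWord_instance_sub (q m : ℕ) (hq0 : 0 < q) (hm : 0 < m) :
    instSet (Zimin 2) (zWord q m hq0) ⊆
      ↑(((Finset.range (q * m + 1)) ×ˢ (Finset.range (q * m + 1))).filter
        (fun p => p.1 + 2 ≤ p.2 ∧ p.2 ≤ q * m ∧ p.1 / m = (p.2 - 1) / m)) := by
  rintro ⟨i, j⟩ ⟨hij, hjn, hinst⟩
  set W := zWord q m hq0 with hW
  have hlen : W.length = q * m := zWord_length q m hq0
  set d : Fin q := ⟨0, hq0⟩ with hd
  obtain ⟨k, b, hk, hb, hsum, hchain⟩ := instance_pairs_spec d hij hjn hinst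
  have hjn' : j ≤ q * m := by rwa [hlen] at hjn
  have hchain' : ∀ o < k, (i + o) / m = (j - k + o) / m := by
    intro o ho
    have h1 : i + o < q * m := by omega
    have h2 : j - k + o < q * m := by omega
    have hco := congrArg Fin.val (hchain o ho)
    rwa [zWord_getD_val q m hq0 hm h1, zWord_getD_val q m hq0 hm h2] at hco
  have hdiv : i / m = (j - 1) / m := by
    rcases div_chain m i k with hconst | ⟨o, ho, hlt⟩
    · have e1 : i / m = (i + (k - 1)) / m := (hconst (k - 1) (by omega)).symm
      have e2 : (i + (k - 1)) / m = (j - k + (k - 1)) / m := hchain' (k - 1) (by omega)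
      have e3 : j - k + (k - 1) = j - 1 := by omega
      rw [e1, e2, e3]
    · exfalso
      have l1 : (j - k + o) / m < (j - k + o + 1) / m := by
        have c1 := hchain' o (by omega)
        have c2 := hchain' (o + 1) (by omega)
        rw [show i + (o + 1) = i + o + 1 by ring,
          show j - k + (o + 1) = j - k + o + 1 by omega] at c2
        rw [← c1, ← c2]
        exact hlt
      have a1 := div_succ_dvd m (i + o) hlt
      have a2 := div_succ_dvd m (j - k + o) l1
      rw [hchain' o (by omega)] at a1
      have : i + o + 1 = j - k + o + 1 := a1.trans a2.symm
      omega
  refine Finset.mem_coe.mpr (Finset.mem_filter.mpr ⟨?_, by omega, hjn', hdiv⟩)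
  simp only [Finset.mem_product, Finset.mem_range]
  omega

lemma count_lt (m : ℕ) : (((Finset.range m) ×ˢ (Finset.range m)).filter
    (fun p => p.1 < p.2)).card * 2 = m * (m - 1) := by
  rw [Finset.card_eq_sum_card_fiberwise (f := Prod.snd) (t := Finset.range m)
    (by intro p hp; obtain ⟨a, b⟩ := p; simp only [Finset.mem_coe, Finset.mem_filter, Finset.mem_product,
      Finset.mem_range] at hp ⊢; exact hp.1.2)]
  have hfib : ∀ b ∈ Finset.range m, ((((Finset.range m) ×ˢ (Finset.range m)).filter
      (fun p => p.1 < p.2)).filter (fun p => p.2 = b)).card = b := by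
    intro b hb
    rw [Finset.mem_range] at hb
    have he : (((Finset.range m) ×ˢ (Finset.range m)).filter
        (fun p => p.1 < p.2)).filter (fun p => p.2 = b) =
        (Finset.range b).image (fun a => (a, b)) := by
      ext ⟨x, y⟩
      simp only [Finset.mem_filter, Finset.mem_product, Finset.mem_range, Finset.mem_image,
        Prod.mk.injEq]
      constructor
      · rintro ⟨⟨⟨hx, hy⟩, hxy⟩, rfl⟩
        exact ⟨x, by omega, rfl, rfl⟩
      · rintro ⟨a, ha, rfl, rfl⟩
        omega
    rw [he, Finset.card_image_of_injective _ (fun x y hxy => by simpa using hxy),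
      Finset.card_range]
  rw [Finset.sum_congr rfl hfib]
  exact Finset.sum_range_id_mul_two m

lemma T_card (q m : ℕ) (hm : 0 < m) :
    (((Finset.range (q * m + 1)) ×ˢ (Finset.range (q * m + 1))).filter
      (fun p => p.1 + 2 ≤ p.2 ∧ p.2 ≤ q * m ∧ p.1 / m = (p.2 - 1) / m)).card * 2 ≤
      q * (m * (m - 1)) := by
  have hinj : (((Finset.range (q * m + 1)) ×ˢ (Finset.range (q * m + 1))).filter
      (fun p => p.1 + 2 ≤ p.2 ∧ p.2 ≤ q * m ∧ p.1 / m = (p.2 - 1) / m)).card ≤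
      ((Finset.range q) ×ˢ (((Finset.range m) ×ˢ (Finset.range m)).filter
        (fun p => p.1 < p.2))).card := by
    apply Finset.card_le_card_of_injOn
      (fun p => (p.1 / m, (p.1 % m, (p.2 - 1) % m)))
    · intro p hp
      obtain ⟨a, b⟩ := p
      simp only [Finset.mem_coe, Finset.mem_filter, Finset.mem_product, Finset.mem_range] at hp ⊢
      obtain ⟨⟨ha, hb⟩, h2, hbn, hdiv⟩ := hp
      have ham : a < q * m := by omega
      refine ⟨(Nat.div_lt_iff_lt_mul hm).2 ham, ⟨Nat.mod_lt _ hm, Nat.mod_lt _ hm⟩, ?_⟩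
      have e1 := Nat.div_add_mod a m
      have e2 := Nat.div_add_mod (b - 1) m
      rw [← hdiv] at e2
      set X := m * (a / m) with hX
      omega
    · rintro ⟨a, b⟩ ha ⟨a', b'⟩ hb h
      simp only [Finset.coe_filter, Set.mem_setOf_eq, Finset.mem_product,
        Finset.mem_range] at ha hb
      simp only [Prod.mk.injEq] at h
      obtain ⟨hd, hm1, hm2⟩ := h
      have e1 := Nat.div_add_mod a m
      have e1' := Nat.div_add_mod a' m
      have e2 := Nat.div_add_mod (b - 1) m
      have e2' := Nat.div_add_mod (b' - 1) m
      rw [← ha.2.2.2] at e2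
      rw [← hb.2.2.2] at e2'
      have hab : a = a' := by
        rw [← e1, ← e1', hd, hm1]
      have hd' : a / m = a' / m := by rw [hab]
      rw [hd'] at e2
      set X := m * (a' / m) with hX
      have : b - 1 = b' - 1 := by omega
      have hb2 : 2 ≤ b := by omega
      have hb2' : 2 ≤ b' := by omega
      simp only [Prod.mk.injEq]
      omega
  calc _ ≤ ((Finset.range q) ×ˢ (((Finset.range m) ×ˢ (Finset.range m)).filter
        (fun p => p.1 < p.2))).card * 2 := by omega
    _ = q * ((((Finset.range m) ×ˢ (Finset.range m)).filter
        (fun p => p.1 < p.2)).card * 2) := by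
          rw [Finset.card_product, Finset.card_range]; ring
    _ = q * (m * (m - 1)) := by rw [count_lt]

lemma upper_density (q m : ℕ) (hq : 2 ≤ q) (hm : 1 ≤ m) (hq0 : 0 < q) :
    instDensity (Zimin 2) (zWord q m hq0) ≤ 1 / (q : ℝ) := by
  set W := zWord q m hq0 with hW
  set T := (((Finset.range (q * m + 1)) ×ˢ (Finset.range (q * m + 1))).filter
      (fun p => p.1 + 2 ≤ p.2 ∧ p.2 ≤ q * m ∧ p.1 / m = (p.2 - 1) / m)) with hT
  have hlen : W.length = q * m := zWord_length q m hq0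
  have hcount : instSubCount (Zimin 2) W ≤ T.card := by
    rw [instSubCount_eq_ncard, ← Set.ncard_coe_finset T]
    exact Set.ncard_le_ncard (zWord_instance_sub q m hq0 (by omega)) (Finset.finite_toSet T)
  have hTc : T.card * 2 ≤ q * (m * (m - 1)) := T_card q m (by omega)
  have hcc : instSubCount (Zimin 2) W * 2 ≤ q * (m * (m - 1)) := by omega
  have hccR : (instSubCount (Zimin 2) W : ℝ) * 2 ≤ q * (m * ((m : ℝ) - 1)) := by
    have := Nat.cast_le (α := ℝ) |>.2 hcc
    push_cast at this
    rw [Nat.cast_sub hm] at this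
    push_cast at this
    convert this using 2 <;> ring_nf
  have hq2 : (2 : ℝ) ≤ q := by exact_mod_cast hq
  have hm1 : (1 : ℝ) ≤ m := by exact_mod_cast hm
  have hqm : (2 : ℝ) ≤ (q : ℝ) * m := by nlinarith
  rw [instDensity, hlen, choose_two_cast]
  rw [div_le_div_iff₀ (by push_cast; nlinarith) (by nlinarith)]
  have hc0 : (0 : ℝ) ≤ instSubCount (Zimin 2) W := Nat.cast_nonneg _
  push_cast
  nlinarith [mul_le_mul_of_nonneg_left hccR (by nlinarith : (0:ℝ) ≤ (q:ℝ)),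
    mul_nonneg (mul_nonneg (show (0:ℝ) ≤ q by linarith) (show (0:ℝ) ≤ q by linarith))
      (show (0:ℝ) ≤ m by linarith),
    mul_nonneg (show (0:ℝ) ≤ q by linarith) (show (0:ℝ) ≤ m by linarith)]

theorem stmt8 (q : ℕ) (hq : 2 ≤ q) : liminfDensity (Zimin 2) q = 1 / (q : ℝ) := by
  have hq0 : 0 < q := by omega
  set u : List (Fin q) → ℝ := fun W => instDensity (Zimin 2) W with hu
  set F : Filter (List (Fin q)) := Filter.comap List.length Filter.atTop with hF
  have hfreq : ∃ᶠ W in F, u W ≤ 1 / (q : ℝ) := by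
    rw [hF, Filter.frequently_comap, Filter.frequently_atTop]
    intro N
    refine ⟨q * (N + 1), ?_, zWord q (N + 1) hq0, zWord_length q (N + 1) hq0,
      upper_density q (N + 1) hq (by omega) hq0⟩
    calc N ≤ 2 * (N + 1) := by omega
      _ ≤ q * (N + 1) := Nat.mul_le_mul_right _ hq
  have hbdd : Filter.IsBoundedUnder (· ≥ ·) F u := by
    refine ⟨0, ?_⟩
    rw [Filter.eventually_map]
    exact Filter.Eventually.of_forall fun W => instDensity_nonneg _ _
  have h1 : Filter.liminf u F ≤ 1 / (q : ℝ) :=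
    Filter.liminf_le_of_frequently_le hfreq hbdd
  have hcob : Filter.IsCoboundedUnder (· ≥ ·) F u := by
    refine ⟨1 / (q : ℝ), fun a ha => ?_⟩
    have ha' : ∀ᶠ W in F, u W ≥ a := Filter.eventually_map.mp ha
    obtain ⟨W, hW1, hW2⟩ := (hfreq.and_eventually ha').exists
    linarith
  have h2 : ∀ ε : ℝ, 0 < ε → 1 / (q : ℝ) - ε ≤ Filter.liminf u F := by
    intro ε hε
    refine Filter.le_liminf_of_le hcob ?_
    rw [hF, Filter.eventually_comap, Filter.eventually_atTop]
    refine ⟨⌈(4 : ℝ) / ε⌉₊, fun n hn W hW => ?_⟩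
    apply lower_density q hq hε
    rw [hW]
    calc (4 : ℝ) / ε ≤ ⌈(4 : ℝ) / ε⌉₊ := Nat.le_ceil _
      _ ≤ n := by exact_mod_cast hn
  have h3 : 1 / (q : ℝ) ≤ Filter.liminf u F := by
    by_contra h
    push_neg at h
    have := h2 ((1 / (q : ℝ) - Filter.liminf u F) / 2) (by linarith)
    linarith
  exact le_antisymm h1 h3
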